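/- If the generator voltage magnitude is fixed at |V_g| = v > 0, then the power-flow solution satisfies W_P(Q_n) ≥ 0, and the net real power is one of the two roots P_n = (R·v² + √(k_ZV·W_P(Q_n)))/|Z|² or P_n = (R·v² − √(k_ZV·W_P(Q_n)))/|Z|². -/

import Mathlib

set_option maxHeartbeats 1000000


/-- Two-bus power-flow model with fixed generator voltage magnitude `|Vg| = v > 0`.
The power-flow solution satisfies `W_P(Qn) ≥ 0`, and the net real power is one of the
two roots `Pn = (R·v² ± √(k_ZV·W_P(Qn)))/|Z|²`. -/
theorem net_real_power_roots
    (R X Vt v : ℝ) (hR : 0 < R) (hX : 0 < X) (hVt : 0 < Vt) (hv : 0 < v)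
    (Vg : ℂ) (hVg : ‖Vg‖ = v) :
    let Z : ℂ := ⟨R, X⟩
    let Icur : ℂ := (Vg - (Vt : ℂ)) / Z
    let Sn : ℂ := Vg * (starRingEnd ℂ) Icur
    let Pn : ℝ := Sn.re
    let Qn : ℝ := Sn.im
    let Zm : ℝ := ‖Z‖
    let WP : ℝ → ℝ := fun Q =>
      R ^ 2 / Zm ^ 4 - Q ^ 2 / v ^ 4 - (v ^ 2 - Vt ^ 2 - 2 * Q * X) / (Zm ^ 2 * v ^ 2)
    let kZV : ℝ := Zm ^ 4 * v ^ 4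
    0 ≤ WP Qn ∧
      (Pn = (R * v ^ 2 + Real.sqrt (kZV * WP Qn)) / Zm ^ 2 ∨
       Pn = (R * v ^ 2 - Real.sqrt (kZV * WP Qn)) / Zm ^ 2) := by
  intro Z Icur Sn Pn Qn Zm WP kZV
  set a := Vg.re with ha
  set b := Vg.im with hb
  have hden : (0:ℝ) < R^2 + X^2 := by positivity
  have hZms : Zm^2 = R^2 + X^2 := by
    simp only [Zm, Complex.sq_norm, Complex.normSq_mk, Z]; ring
  have hZm : 0 < Zm := by nlinarith [norm_nonneg Z]
  have hv2 : a^2 + b^2 = v^2 := by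
    have h := Complex.sq_norm Vg
    rw [hVg, Complex.normSq_apply] at h
    rw [ha, hb, h]; ring
  have hPn : Pn = (R*(v^2 - Vt*a) + X*Vt*b)/(R^2+X^2) := by
    simp only [Pn, Sn, Icur, Z, Complex.mul_re, Complex.mul_im, map_div₀,
      Complex.div_re, Complex.div_im, Complex.conj_re, Complex.conj_im,
      Complex.sub_re, Complex.sub_im, Complex.ofReal_re, Complex.ofReal_im,
      Complex.normSq_apply, ← ha, ← hb]
    rw [← hv2]
    field_simp
    ring
  have hQn : Qn = (X*(v^2 - Vt*a) - R*Vt*b)/(R^2+X^2) := by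
    simp only [Qn, Sn, Icur, Z, Complex.mul_re, Complex.mul_im, map_div₀,
      Complex.div_re, Complex.div_im, Complex.conj_re, Complex.conj_im,
      Complex.sub_re, Complex.sub_im, Complex.ofReal_re, Complex.ofReal_im,
      Complex.normSq_apply, ← ha, ← hb]
    rw [← hv2]
    field_simp
    ring
  have hkey : kZV * WP Qn = ((R^2+X^2)*Pn - R*v^2)^2 := by
    have h4 : Zm^4 = (R^2+X^2)^2 := by rw [show Zm^4 = (Zm^2)^2 from by ring, hZms]
    simp only [kZV, WP, h4, hZms, hPn, hQn]
    rw [show v^4 = (v^2)^2 from by ring, ← hv2]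
    have hab : a^2 + b^2 ≠ 0 := by rw [hv2]; positivity
    field_simp
    ring
  have hsq : 0 ≤ kZV * WP Qn := by rw [hkey]; positivity
  have hk : 0 < kZV := by simp only [kZV]; positivity
  constructor
  · nlinarith
  · rw [hkey, Real.sqrt_sq_eq_abs]
    rcases abs_cases ((R^2+X^2)*Pn - R*v^2) with ⟨h, _⟩ | ⟨h, _⟩
    · left; rw [h, hZms]; field_simp; ring
    · right; rw [h, hZms]; field_simp; ring
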